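/- arXiv:2204.08591 — 3 statements merged into one kernel-verified Lean document; each statement's English description precedes it below -/
import Mathlib

section
/- (Pointwise coassociative characterization, proved in Section 2.2.1) Let x, y, z, w be orthonormal vectors in ℝ⁷ and let S be their span. Then φ vanishes identically on S (i.e. φ(u,v,r) = 0 for all u,v,r ∈ S) if and only if |ψ(x,y,z,w)| = 1. -/
open scoped RealInnerProductSpace

noncomputable section

abbrev E7 : Type := EuclideanSpace ℝ (Fin 7)

/-- The standard orthonormal basis vectors of ℝ⁷. -/
def e7 (i : Fin 7) : E7 := EuclideanSpace.single i 1

/-- Kronecker delta. -/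
def kd7 (i j : Fin 7) : ℝ := if i = j then 1 else 0

/-- `e^{abc}(e_i, e_j, e_k)` : component of a wedge of three dual basis covectors. -/
def trip7 (a b c i j k : Fin 7) : ℝ :=
  Matrix.det !![kd7 a i, kd7 a j, kd7 a k;
                kd7 b i, kd7 b j, kd7 b k;
                kd7 c i, kd7 c j, kd7 c k]

/-- `e^{abcd}(e_i, e_j, e_k, e_l)` : component of a wedge of four dual basis covectors. -/
def quad7 (a b c d i j k l : Fin 7) : ℝ :=
  Matrix.det !![kd7 a i, kd7 a j, kd7 a k, kd7 a l;
                kd7 b i, kd7 b j, kd7 b k, kd7 b l;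
                kd7 c i, kd7 c j, kd7 c k, kd7 c l;
                kd7 d i, kd7 d j, kd7 d k, kd7 d l]

/-- Components `φ_{ijk}` of the standard G₂ 3-form
`φ = e¹²³ + e¹⁴⁵ − e¹⁶⁷ + e²⁴⁶ − e²⁷⁵ + e³⁴⁷ − e³⁵⁶` (indices shifted to be 0-based). -/
def phiC (i j k : Fin 7) : ℝ :=
  trip7 0 1 2 i j k + trip7 0 3 4 i j k - trip7 0 5 6 i j k
  + trip7 1 3 5 i j k - trip7 1 6 4 i j k + trip7 2 3 6 i j k - trip7 2 4 5 i j k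

/-- Components `ψ_{ijkl}` of the Hodge dual 4-form
`ψ = e⁴⁵⁶⁷ − e²³⁴⁵ + e²³⁶⁷ − e³¹⁴⁶ + e³¹⁷⁵ − e¹²⁴⁷ + e¹²⁵⁶` (0-based). -/
def psiC (i j k l : Fin 7) : ℝ :=
  quad7 3 4 5 6 i j k l - quad7 1 2 3 4 i j k l + quad7 1 2 5 6 i j k l
  - quad7 2 0 3 5 i j k l + quad7 2 0 6 4 i j k l
  - quad7 0 1 3 6 i j k l + quad7 0 1 4 5 i j k l

/-- The standard G₂ 3-form evaluated on arbitrary vectors. -/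
def phi7 (x y z : E7) : ℝ := ∑ i, ∑ j, ∑ k, x i * y j * z k * phiC i j k

/-- The 4-form ψ evaluated on arbitrary vectors. -/
def psi7 (x y z w : E7) : ℝ :=
  ∑ i, ∑ j, ∑ k, ∑ l, x i * y j * z k * w l * psiC i j k l

/-- The cross product on ℝ⁷, characterized by `⟨x × y, z⟩ = φ(x,y,z)`. -/
def cross7 (x y : E7) : E7 := (WithLp.equiv 2 (Fin 7 → ℝ)).symm fun k => phi7 x y (e7 k)

/-- The vector-valued 3-form χ, characterized by `⟨χ(x,y,z), w⟩ = ψ(x,y,z,w)`. -/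
def chi7 (x y z : E7) : E7 := (WithLp.equiv 2 (Fin 7 → ℝ)).symm fun l => psi7 x y z (e7 l)


lemma trip7_kd (a b c i j k : Fin 7) : trip7 a b c i j k =
    kd7 a i * kd7 b j * kd7 c k - kd7 a i * kd7 c j * kd7 b k
    - kd7 b i * kd7 a j * kd7 c k + kd7 c i * kd7 a j * kd7 b k
    + kd7 b i * kd7 c j * kd7 a k - kd7 c i * kd7 b j * kd7 a k := by
  simp [trip7, Matrix.det_fin_three]
  try ring

lemma quad7_kd (a b c d i j k l : Fin 7) : quad7 a b c d i j k l =
    kd7 a i * kd7 b j * kd7 c k * kd7 d l - kd7 a i * kd7 b j * kd7 d k * kd7 c l - kd7 a i * kd7 c j * kd7 b k * kd7 d l + kd7 a i * kd7 d j * kd7 b k * kd7 c l + kd7 a i * kd7 c j * kd7 d k * kd7 b l - kd7 a i * kd7 d j * kd7 c k * kd7 b l - kd7 b i * kd7 a j * kd7 c k * kd7 d l + kd7 b i * kd7 a j * kd7 d k * kd7 c l + kd7 c i * kd7 a j * kd7 b k * kd7 d l - kd7 d i * kd7 a j * kd7 b k * kd7 c l - kd7 c i * kd7 a j * kd7 d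 k * kd7 b l + kd7 d i * kd7 a j * kd7 c k * kd7 b l + kd7 b i * kd7 c j * kd7 a k * kd7 d l - kd7 b i * kd7 d j * kd7 a k * kd7 c l - kd7 c i * kd7 b j * kd7 a k * kd7 d l + kd7 d i * kd7 b j * kd7 a k * kd7 c l + kd7 c i * kd7 d j * kd7 a k * kd7 b l - kd7 d i * kd7 c j * kd7 a k * kd7 b l - kd7 b i * kd7 c j * kd7 d k * kd7 a l + kd7 b i * kd7 d j * kd7 c k * kd7 a l + kd7 c i * kd7 b j * kd7 d k * kd7 a l - kd7 d i * kd7 b j * kd7 c k * kd7 a l - kd7 c i * kd7 d j * kd7 b k * kd7 a l + kd7 d i * kd7 c j * kd7 b k * kd7 a l := by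
  simp [quad7, Matrix.det_succ_row_zero, Fin.sum_univ_succ, Matrix.det_fin_three,
    Matrix.submatrix_apply, Fin.succAbove]
  try ring

lemma trip_sum (a b c : Fin 7) (x y z : E7) :
    (∑ i, ∑ j, ∑ k, x i * y j * z k * trip7 a b c i j k) =
    x a * y b * z c - x a * y c * z b - x b * y a * z c + x b * y c * z a
      + x c * y a * z b - x c * y b * z a := by
  simp only [trip7_kd, kd7]
  simp only [mul_ite, mul_one, mul_zero, ite_mul, zero_mul, one_mul,
    mul_sub, mul_add, Finset.sum_add_distrib, Finset.sum_sub_distrib,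
    Finset.sum_ite_eq, Finset.mem_univ, if_true, Finset.sum_const_zero]
  try ring

lemma quad_sum (a b c d : Fin 7) (x y z w : E7) :
    (∑ i, ∑ j, ∑ k, ∑ l, x i * y j * z k * w l * quad7 a b c d i j k l) =
    x a * y b * z c * w d - x a * y b * z d * w c - x a * y c * z b * w d + x a * y d * z b * w c + x a * y c * z d * w b - x a * y d * z c * w b - x b * y a * z c * w d + x b * y a * z d * w c + x c * y a * z b * w d - x d * y a * z b * w c - x c * y a * z d * w b + x d * y a * z c * w b + x b * y c * z a * w d - x b * y d * z a * w c - x c * y b * z a * w d + x d * y b * z a * w c + x c * y d * z a * w b - x d * y c * z a * w b - x b * y c * z d * w a + x b * y d * z c * w a + x c * y b * z d * w a - x d * y b * z c * w a - x c * y d * z b * w a + x d * y c * z b * w a := by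
  simp only [quad7_kd, kd7]
  simp only [mul_ite, mul_one, mul_zero, ite_mul, zero_mul, one_mul,
    mul_sub, mul_add, Finset.sum_add_distrib, Finset.sum_sub_distrib,
    Finset.sum_ite_eq, Finset.mem_univ, if_true, Finset.sum_const_zero]
  try ring

lemma phi7_formula (x y z : E7) : phi7 x y z =
    x 0 * y 1 * z 2 - x 0 * y 2 * z 1 - x 1 * y 0 * z 2 + x 1 * y 2 * z 0 + x 2 * y 0 * z 1 - x 2 * y 1 * z 0 + x 0 * y 3 * z 4 - x 0 * y 4 * z 3 - x 3 * y 0 * z 4 + x 3 * y 4 * z 0 + x 4 * y 0 * z 3 - x 4 * y 3 * z 0 - x 0 * y 5 * z 6 + x 0 * y 6 * z 5 + x 5 * y 0 * z 6 - x 5 * y 6 * z 0 - x 6 * y 0 * z 5 + x 6 * y 5 * z 0 + x 1 * y 3 * z 5 - x 1 * y 5 * z 3 - x 3 * y 1 * z 5 + x 3 * y 5 * z 1 + x 5 * y 1 * z 3 - x 5 * y 3 * z 1 - x 1 * y 6 * z 4 + x 1 * y 4 * z 6 + x 6 * y 1 * z 4 - x 6 * y 4 * z 1 - x 4 * y 1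 * z 6 + x 4 * y 6 * z 1 + x 2 * y 3 * z 6 - x 2 * y 6 * z 3 - x 3 * y 2 * z 6 + x 3 * y 6 * z 2 + x 6 * y 2 * z 3 - x 6 * y 3 * z 2 - x 2 * y 4 * z 5 + x 2 * y 5 * z 4 + x 4 * y 2 * z 5 - x 4 * y 5 * z 2 - x 5 * y 2 * z 4 + x 5 * y 4 * z 2 := by
  simp only [phi7, phiC, mul_add, mul_sub, Finset.sum_add_distrib, Finset.sum_sub_distrib,
    trip_sum]
  try ring

lemma psi7_formula (x y z w : E7) : psi7 x y z w =
    x 3 * y 4 * z 5 * w 6 - x 3 * y 4 * z 6 * w 5 - x 3 * y 5 * z 4 * w 6 + x 3 * y 6 * z 4 * w 5 + x 3 * y 5 * z 6 * w 4 - x 3 * y 6 * z 5 * w 4 - x 4 * y 3 * z 5 * w 6 + x 4 * y 3 * z 6 * w 5 + x 5 * y 3 * z 4 * w 6 - x 6 * y 3 * z 4 * w 5 - x 5 * y 3 * z 6 * w 4 + x 6 * y 3 * z 5 * w 4 + x 4 * y 5 * z 3 * w 6 - x 4 * y 6 * z 3 * w 5 - x 5 * y 4 * z 3 * w 6 + x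 6 * y 4 * z 3 * w 5 + x 5 * y 6 * z 3 * w 4 - x 6 * y 5 * z 3 * w 4 - x 4 * y 5 * z 6 * w 3 + x 4 * y 6 * z 5 * w 3 + x 5 * y 4 * z 6 * w 3 - x 6 * y 4 * z 5 * w 3 - x 5 * y 6 * z 4 * w 3 + x 6 * y 5 * z 4 * w 3 - x 1 * y 2 * z 3 * w 4 + x 1 * y 2 * z 4 * w 3 + x 1 * y 3 * z 2 * w 4 - x 1 * y 4 * z 2 * w 3 - x 1 * y 3 * z 4 * w 2 + x 1 * y 4 * z 3 * w 2 + x 2 * y 1 * z 3 * w 4 - x 2 * y 1 * z 4 * w 3 - x 3 * y 1 * z 2 * w 4 + x 4 * y 1 * z 2 * w 3 + x 3 * y 1 * z 4 * w 2 - x 4 * y 1 * z 3 * w 2 - x 2 * y 3 * z 1 * w 4 + x 2 * y 4 * z 1 * w 3 + x 3 * y 2 * z 1 * w 4 - x 4 * y 2 * z 1 * w 3 - x 3 * y 4 * z 1 * w 2 + x 4 * y 3 * z 1 * w 2 + x 2 * y 3 * z 4 * w 1 - x 2 * y 4 * z 3 * w 1 - x 3 * y 2 * z 4 * w 1 + x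 4 * y 2 * z 3 * w 1 + x 3 * y 4 * z 2 * w 1 - x 4 * y 3 * z 2 * w 1 + x 1 * y 2 * z 5 * w 6 - x 1 * y 2 * z 6 * w 5 - x 1 * y 5 * z 2 * w 6 + x 1 * y 6 * z 2 * w 5 + x 1 * y 5 * z 6 * w 2 - x 1 * y 6 * z 5 * w 2 - x 2 * y 1 * z 5 * w 6 + x 2 * y 1 * z 6 * w 5 + x 5 * y 1 * z 2 * w 6 - x 6 * y 1 * z 2 * w 5 - x 5 * y 1 * z 6 * w 2 + x 6 * y 1 * z 5 * w 2 + x 2 * y 5 * z 1 * w 6 - x 2 * y 6 * z 1 * w 5 - x 5 * y 2 * z 1 * w 6 + x 6 * y 2 * z 1 * w 5 + x 5 * y 6 * z 1 * w 2 - x 6 * y 5 * z 1 * w 2 - x 2 * y 5 * z 6 * w 1 + x 2 * y 6 * z 5 * w 1 + x 5 * y 2 * z 6 * w 1 - x 6 * y 2 * z 5 * w 1 - x 5 * y 6 * z 2 * w 1 + x 6 * y 5 * z 2 * w 1 - x 2 * y 0 * z 3 * w 5 + x 2 * y 0 * z 5 * w 3 + x 2 * y 3 * z 0 * w 5 - x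 2 * y 5 * z 0 * w 3 - x 2 * y 3 * z 5 * w 0 + x 2 * y 5 * z 3 * w 0 + x 0 * y 2 * z 3 * w 5 - x 0 * y 2 * z 5 * w 3 - x 3 * y 2 * z 0 * w 5 + x 5 * y 2 * z 0 * w 3 + x 3 * y 2 * z 5 * w 0 - x 5 * y 2 * z 3 * w 0 - x 0 * y 3 * z 2 * w 5 + x 0 * y 5 * z 2 * w 3 + x 3 * y 0 * z 2 * w 5 - x 5 * y 0 * z 2 * w 3 - x 3 * y 5 * z 2 * w 0 + x 5 * y 3 * z 2 * w 0 + x 0 * y 3 * z 5 * w 2 - x 0 * y 5 * z 3 * w 2 - x 3 * y 0 * z 5 * w 2 + x 5 * y 0 * z 3 * w 2 + x 3 * y 5 * z 0 * w 2 - x 5 * y 3 * z 0 * w 2 + x 2 * y 0 * z 6 * w 4 - x 2 * y 0 * z 4 * w 6 - x 2 * y 6 * z 0 * w 4 + x 2 * y 4 * z 0 * w 6 + x 2 * y 6 * z 4 * w 0 - x 2 * y 4 * z 6 * w 0 - x 0 * y 2 * z 6 * w 4 + x 0 * y 2 * z 4 * w 6 + x 6 * y 2 * z 0 * w 4 - x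 4 * y 2 * z 0 * w 6 - x 6 * y 2 * z 4 * w 0 + x 4 * y 2 * z 6 * w 0 + x 0 * y 6 * z 2 * w 4 - x 0 * y 4 * z 2 * w 6 - x 6 * y 0 * z 2 * w 4 + x 4 * y 0 * z 2 * w 6 + x 6 * y 4 * z 2 * w 0 - x 4 * y 6 * z 2 * w 0 - x 0 * y 6 * z 4 * w 2 + x 0 * y 4 * z 6 * w 2 + x 6 * y 0 * z 4 * w 2 - x 4 * y 0 * z 6 * w 2 - x 6 * y 4 * z 0 * w 2 + x 4 * y 6 * z 0 * w 2 - x 0 * y 1 * z 3 * w 6 + x 0 * y 1 * z 6 * w 3 + x 0 * y 3 * z 1 * w 6 - x 0 * y 6 * z 1 * w 3 - x 0 * y 3 * z 6 * w 1 + x 0 * y 6 * z 3 * w 1 + x 1 * y 0 * z 3 * w 6 - x 1 * y 0 * z 6 * w 3 - x 3 * y 0 * z 1 * w 6 + x 6 * y 0 * z 1 * w 3 + x 3 * y 0 * z 6 * w 1 - x 6 * y 0 * z 3 * w 1 - x 1 * y 3 * z 0 * w 6 + x 1 * y 6 * z 0 * w 3 + x 3 * y 1 * z 0 * w 6 - x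 6 * y 1 * z 0 * w 3 - x 3 * y 6 * z 0 * w 1 + x 6 * y 3 * z 0 * w 1 + x 1 * y 3 * z 6 * w 0 - x 1 * y 6 * z 3 * w 0 - x 3 * y 1 * z 6 * w 0 + x 6 * y 1 * z 3 * w 0 + x 3 * y 6 * z 1 * w 0 - x 6 * y 3 * z 1 * w 0 + x 0 * y 1 * z 4 * w 5 - x 0 * y 1 * z 5 * w 4 - x 0 * y 4 * z 1 * w 5 + x 0 * y 5 * z 1 * w 4 + x 0 * y 4 * z 5 * w 1 - x 0 * y 5 * z 4 * w 1 - x 1 * y 0 * z 4 * w 5 + x 1 * y 0 * z 5 * w 4 + x 4 * y 0 * z 1 * w 5 - x 5 * y 0 * z 1 * w 4 - x 4 * y 0 * z 5 * w 1 + x 5 * y 0 * z 4 * w 1 + x 1 * y 4 * z 0 * w 5 - x 1 * y 5 * z 0 * w 4 - x 4 * y 1 * z 0 * w 5 + x 5 * y 1 * z 0 * w 4 + x 4 * y 5 * z 0 * w 1 - x 5 * y 4 * z 0 * w 1 - x 1 * y 4 * z 5 * w 0 + x 1 * y 5 * z 4 * w 0 + x 4 * y 1 * z 5 * w 0 - x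 5 * y 1 * z 4 * w 0 - x 4 * y 5 * z 1 * w 0 + x 5 * y 4 * z 1 * w 0 := by
  simp only [psi7, psiC, mul_add, mul_sub, Finset.sum_add_distrib, Finset.sum_sub_distrib,
    quad_sum]
  try ring

set_option maxRecDepth 8000
set_option maxHeartbeats 2000000

lemma inner7 (u v : E7) : ⟪u, v⟫ = ∑ i, u i * v i := by
  simp [PiLp.inner_apply, RCLike.inner_apply, conj_trivial]
  exact Finset.sum_congr rfl (fun _ _ => mul_comm _ _)

lemma cross7_apply (x y : E7) (k : Fin 7) : cross7 x y k = phi7 x y (e7 k) := rfl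

lemma chi7_apply (x y z : E7) (l : Fin 7) : chi7 x y z l = psi7 x y z (e7 l) := rfl

lemma e7_apply (i j : Fin 7) : e7 i j = if j = i then 1 else 0 := by
  simp [e7, EuclideanSpace.single_apply]

lemma inner_cross (x y v : E7) : ⟪cross7 x y, v⟫ = phi7 x y v := by
  simp only [inner7, Fin.sum_univ_seven, cross7_apply, phi7_formula, e7_apply,
    Fin.reduceEq, reduceIte, if_true]
  ring

lemma inner_chi (x y z v : E7) : ⟪chi7 x y z, v⟫ = psi7 x y z v := by
  simp only [inner7, Fin.sum_univ_seven, chi7_apply, psi7_formula, e7_apply,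
    Fin.reduceEq, reduceIte, if_true]
  ring

lemma master (x y a b : E7) :
    ⟪cross7 x y, cross7 a b⟫ = ⟪x,a⟫ * ⟪y,b⟫ - ⟪x,b⟫ * ⟪y,a⟫ - psi7 x y a b := by
  simp only [inner7, Fin.sum_univ_seven, cross7_apply, phi7_formula, psi7_formula, e7_apply,
    Fin.reduceEq, reduceIte, if_true]
  ring

/-! ### Symmetry and linearity lemmas -/

lemma phi7_swap12 (x y z : E7) : phi7 y x z = -phi7 x y z := by
  simp only [phi7_formula]; ring

lemma phi7_swap23 (x y z : E7) : phi7 x z y = -phi7 x y z := by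
  simp only [phi7_formula]; ring

lemma phi7_cyc (x y z : E7) : phi7 y z x = phi7 x y z := by
  simp only [phi7_formula]; ring

lemma phi7_aab (x z : E7) : phi7 x x z = 0 := by
  simp only [phi7_formula]; ring

lemma phi7_aba (x y : E7) : phi7 x y x = 0 := by
  simp only [phi7_formula]; ring

lemma phi7_abb (x y : E7) : phi7 x y y = 0 := by
  simp only [phi7_formula]; ring

lemma psi7_swap23 (x y z v : E7) : psi7 x z y v = -psi7 x y z v := by
  simp only [psi7_formula]; ring

lemma psi7_cyc123 (x y z v : E7) : psi7 y z x v = psi7 x y z v := by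
  simp only [psi7_formula]; ring

lemma psi7_perm1 (x v y z : E7) : psi7 x v y z = psi7 x y z v := by
  simp only [psi7_formula]; ring

lemma psi7_1e3 (x y v : E7) : psi7 x y x v = 0 := by
  simp only [psi7_formula]; ring

lemma psi7_2e3 (x y v : E7) : psi7 x y y v = 0 := by
  simp only [psi7_formula]; ring

lemma psi7_1e4 (x y z : E7) : psi7 x y z x = 0 := by
  simp only [psi7_formula]; ring

lemma psi7_2e4 (x y z : E7) : psi7 x y z y = 0 := by
  simp only [psi7_formula]; ring

lemma psi7_3e4 (x y z : E7) : psi7 x y z z = 0 := by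
  simp only [psi7_formula]; ring

lemma psi7_abab (x y : E7) : psi7 x y x y = 0 := by
  simp only [psi7_formula]; ring

lemma phi7_add1 (a b y z : E7) : phi7 (a + b) y z = phi7 a y z + phi7 b y z := by
  simp only [phi7_formula, PiLp.add_apply]; ring

lemma phi7_add2 (x a b z : E7) : phi7 x (a + b) z = phi7 x a z + phi7 x b z := by
  simp only [phi7_formula, PiLp.add_apply]; ring

lemma phi7_add3 (x y a b : E7) : phi7 x y (a + b) = phi7 x y a + phi7 x y b := by
  simp only [phi7_formula, PiLp.add_apply]; ring

lemma phi7_smul1 (c : ℝ) (a y z : E7) : phi7 (c • a) y z = c * phi7 a y z := by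
  simp only [phi7_formula, PiLp.smul_apply, smul_eq_mul]; ring

lemma phi7_smul2 (c : ℝ) (x a z : E7) : phi7 x (c • a) z = c * phi7 x a z := by
  simp only [phi7_formula, PiLp.smul_apply, smul_eq_mul]; ring

lemma phi7_smul3 (c : ℝ) (x y a : E7) : phi7 x y (c • a) = c * phi7 x y a := by
  simp only [phi7_formula, PiLp.smul_apply, smul_eq_mul]; ring

lemma phi7_zero1 (y z : E7) : phi7 0 y z = 0 := by
  simp only [phi7_formula, PiLp.zero_apply]; ring

lemma phi7_zero2 (x z : E7) : phi7 x 0 z = 0 := by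
  simp only [phi7_formula, PiLp.zero_apply]; ring

lemma phi7_zero3 (x y : E7) : phi7 x y 0 = 0 := by
  simp only [phi7_formula, PiLp.zero_apply]; ring

/-! ### Derived cross-product identities -/

lemma psi7_cross (x y z : E7) : psi7 x y z (cross7 x y) = 0 := by
  have hm := master x y z (cross7 x y)
  have e1 : ⟪y, cross7 x y⟫ = 0 := by rw [real_inner_comm, inner_cross]; exact phi7_abb x y
  have e2 : ⟪x, cross7 x y⟫ = 0 := by rw [real_inner_comm, inner_cross]; exact phi7_aba x y
  have e3 : ⟪cross7 x y, cross7 z (cross7 x y)⟫ = 0 := by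
    rw [real_inner_comm, inner_cross]; exact phi7_abb z (cross7 x y)
  rw [e1, e2, e3] at hm
  linarith

lemma P7 (x y z v : E7) :
    psi7 x y z v = phi7 x (cross7 y z) v + ⟪x,y⟫ * ⟪v,z⟫ - ⟪x,z⟫ * ⟪v,y⟫ := by
  have h1 : phi7 x (cross7 y z) v = -phi7 x v (cross7 y z) := by
    rw [phi7_swap23]
  have h2 : phi7 x v (cross7 y z) = ⟪cross7 x v, cross7 y z⟫ := (inner_cross _ _ _).symm
  have hm := master x v y z
  have h3 : psi7 x v y z = psi7 x y z v := psi7_perm1 x v y z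
  rw [h3] at hm
  rw [h1, h2, hm]
  ring

/-! ### Norm of chi -/

lemma chi_norm (x y z : E7) (hxx : ⟪x,x⟫ = 1) (hyy : ⟪y,y⟫ = 1) (hzz : ⟪z,z⟫ = 1)
    (hxy : ⟪x,y⟫ = 0) (hxz : ⟪x,z⟫ = 0) (hyz : ⟪y,z⟫ = 0) :
    ⟪chi7 x y z, chi7 x y z⟫ = 1 - phi7 x y z ^ 2 := by
  have hzy : ⟪z,y⟫ = 0 := by rw [real_inner_comm]; exact hyz
  have h7 : ⟪cross7 y z, cross7 y z⟫ = 1 := by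
    rw [master, psi7_abab, hyy, hzz, hyz, hzy]; ring
  have h8 : ⟪x, cross7 y z⟫ = phi7 x y z := by
    rw [real_inner_comm, inner_cross, phi7_cyc]
  have h8' : ⟪cross7 y z, x⟫ = phi7 x y z := by rw [inner_cross, phi7_cyc]
  have h6 : ⟪cross7 x (cross7 y z), cross7 x (cross7 y z)⟫ = 1 - phi7 x y z ^ 2 := by
    rw [master, psi7_abab, hxx, h7, h8, h8']; ring
  have hb : ∀ v : E7, psi7 x y z v = phi7 x (cross7 y z) v := by
    intro v; rw [P7, hxy, hxz]; ring
  calc ⟪chi7 x y z, chi7 x y z⟫ = psi7 x y z (chi7 x y z) := inner_chi _ _ _ _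
    _ = phi7 x (cross7 y z) (chi7 x y z) := hb _
    _ = ⟪cross7 x (cross7 y z), chi7 x y z⟫ := (inner_cross _ _ _).symm
    _ = ⟪chi7 x y z, cross7 x (cross7 y z)⟫ := real_inner_comm _ _
    _ = psi7 x y z (cross7 x (cross7 y z)) := inner_chi _ _ _ _
    _ = phi7 x (cross7 y z) (cross7 x (cross7 y z)) := hb _
    _ = ⟪cross7 x (cross7 y z), cross7 x (cross7 y z)⟫ := (inner_cross _ _ _).symm
    _ = 1 - phi7 x y z ^ 2 := h6

/-! ### Orthogonality to a span -/

lemma mem_orth_span {s : Set E7} {v : E7} (h0 : ∀ u ∈ s, ⟪u, v⟫ = 0) :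
    v ∈ (Submodule.span ℝ s)ᗮ := by
  rw [Submodule.mem_orthogonal]
  intro u hu
  induction hu using Submodule.span_induction with
  | mem a ha => exact h0 a ha
  | zero => simp
  | add a b _ _ iha ihb => rw [inner_add_left, iha, ihb, add_zero]
  | smul t a _ iha => rw [real_inner_smul_left, iha, mul_zero]

/-! ### Forward direction -/

lemma coassoc_forward (x y z w : E7)
    (hxx : ⟪x,x⟫ = 1) (hyy : ⟪y,y⟫ = 1) (hzz : ⟪z,z⟫ = 1) (hww : ⟪w,w⟫ = 1)
    (hxy : ⟪x,y⟫ = 0) (hxz : ⟪x,z⟫ = 0) (hxw : ⟪x,w⟫ = 0)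
    (hyz : ⟪y,z⟫ = 0) (hyw : ⟪y,w⟫ = 0) (hzw : ⟪z,w⟫ = 0)
    (h1 : phi7 x y z = 0) (h2 : phi7 x y w = 0) (h3 : phi7 x z w = 0) (h4 : phi7 y z w = 0) :
    |psi7 x y z w| = 1 := by
  have hyx : ⟪y,x⟫ = 0 := by rw [real_inner_comm]; exact hxy
  have hzx : ⟪z,x⟫ = 0 := by rw [real_inner_comm]; exact hxz
  have hzy : ⟪z,y⟫ = 0 := by rw [real_inner_comm]; exact hyz
  -- inner products with the cross vectors
  have c1 : ⟪x, cross7 x y⟫ = 0 := by rw [real_inner_comm, inner_cross]; exact phi7_aba x y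
  have c2 : ⟪y, cross7 x y⟫ = 0 := by rw [real_inner_comm, inner_cross]; exact phi7_abb x y
  have c3 : ⟪z, cross7 x y⟫ = 0 := by rw [real_inner_comm, inner_cross]; exact h1
  have c4 : ⟪x, cross7 x z⟫ = 0 := by rw [real_inner_comm, inner_cross]; exact phi7_aba x z
  have c5 : ⟪y, cross7 x z⟫ = 0 := by
    rw [real_inner_comm, inner_cross, phi7_swap23, h1, neg_zero]
  have c6 : ⟪z, cross7 x z⟫ = 0 := by rw [real_inner_comm, inner_cross]; exact phi7_abb x z
  have c7 : ⟪x, cross7 y z⟫ = 0 := by rw [real_inner_comm, inner_cross, phi7_cyc]; exact h1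
  have c8 : ⟪y, cross7 y z⟫ = 0 := by rw [real_inner_comm, inner_cross]; exact phi7_aba y z
  have c9 : ⟪z, cross7 y z⟫ = 0 := by rw [real_inner_comm, inner_cross]; exact phi7_abb y z
  have d1 : ⟪cross7 x y, cross7 x y⟫ = 1 := by
    rw [master, psi7_abab, hxx, hyy, hxy, hyx]; ring
  have d2 : ⟪cross7 x z, cross7 x z⟫ = 1 := by
    rw [master, psi7_abab, hxx, hzz, hxz, hzx]; ring
  have d3 : ⟪cross7 y z, cross7 y z⟫ = 1 := by
    rw [master, psi7_abab, hyy, hzz, hyz, hzy]; ring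
  have d4 : ⟪cross7 x y, cross7 x z⟫ = 0 := by
    rw [master, psi7_1e3, hxx, hyz, hxz, hyx]; ring
  have d5 : ⟪cross7 x y, cross7 y z⟫ = 0 := by
    rw [master, psi7_2e3, hxy, hyz, hxz, hyy]; ring
  have d6 : ⟪cross7 x z, cross7 y z⟫ = 0 := by
    rw [master, psi7_2e4, hxy, hzz, hxz, hzy]; ring
  -- the orthonormal 6-frame
  have c1' := (real_inner_comm _ _).trans c1
  have c4' := (real_inner_comm _ _).trans c4
  have c7' := (real_inner_comm _ _).trans c7
  have c2' := (real_inner_comm _ _).trans c2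
  have c5' := (real_inner_comm _ _).trans c5
  have c8' := (real_inner_comm _ _).trans c8
  have c3' := (real_inner_comm _ _).trans c3
  have c6' := (real_inner_comm _ _).trans c6
  have c9' := (real_inner_comm _ _).trans c9
  have d4' := (real_inner_comm _ _).trans d4
  have d5' := (real_inner_comm _ _).trans d5
  have d6' := (real_inner_comm _ _).trans d6
  have hon : Orthonormal ℝ ![x, y, z, cross7 x y, cross7 x z, cross7 y z] := by
    rw [orthonormal_iff_ite]
    intro i j
    fin_cases i <;> fin_cases j
    · exact hxx
    · exact hxy
    · exact hxz
    · exact c1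
    · exact c4
    · exact c7
    · exact hyx
    · exact hyy
    · exact hyz
    · exact c2
    · exact c5
    · exact c8
    · exact hzx
    · exact hzy
    · exact hzz
    · exact c3
    · exact c6
    · exact c9
    · exact c1'
    · exact c2'
    · exact c3'
    · exact d1
    · exact d4
    · exact d5
    · exact c4'
    · exact c5'
    · exact c6'
    · exact d4'
    · exact d2
    · exact d6
    · exact c7'
    · exact c8'
    · exact c9'
    · exact d5'
    · exact d6'
    · exact d3
  set K : Submodule ℝ E7 := Submodule.span ℝ (Set.range ![x, y, z, cross7 x y, cross7 x z, cross7 y z]) with hK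
  have hfr : Module.finrank ℝ K = 6 := by
    rw [hK, finrank_span_eq_card hon.linearIndependent]
    simp
  have hfr' : Module.finrank ℝ Kᗮ = 1 := by
    have h7 := Submodule.finrank_add_finrank_orthogonal (K := K)
    rw [hfr, finrank_euclideanSpace_fin] at h7
    omega
  have e2 : ⟪cross7 x y, w⟫ = 0 := by rw [inner_cross]; exact h2
  have e3 : ⟪cross7 x z, w⟫ = 0 := by rw [inner_cross]; exact h3
  have e4 : ⟪cross7 y z, w⟫ = 0 := by rw [inner_cross]; exact h4
  have hwmem : w ∈ Kᗮ := by
    rw [hK]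
    apply mem_orth_span
    rintro u ⟨i, rfl⟩
    fin_cases i
    · exact hxw
    · exact hyw
    · exact hzw
    · exact e2
    · exact e3
    · exact e4
  have hchi1 : ⟪chi7 x y z, cross7 x z⟫ = 0 := by
    rw [inner_chi]
    have ha := psi7_swap23 x y z (cross7 x z)
    have hb := psi7_cross x z y
    linarith
  have hchi2 : ⟪chi7 x y z, cross7 y z⟫ = 0 := by
    rw [inner_chi, ← psi7_cyc123]
    exact psi7_cross y z x
  have g1 : ⟪x, chi7 x y z⟫ = 0 := by
    rw [real_inner_comm, inner_chi]; exact psi7_1e4 x y z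
  have g2 : ⟪y, chi7 x y z⟫ = 0 := by
    rw [real_inner_comm, inner_chi]; exact psi7_2e4 x y z
  have g3 : ⟪z, chi7 x y z⟫ = 0 := by
    rw [real_inner_comm, inner_chi]; exact psi7_3e4 x y z
  have g4 : ⟪cross7 x y, chi7 x y z⟫ = 0 := by
    rw [real_inner_comm, inner_chi]; exact psi7_cross x y z
  have g5 : ⟪cross7 x z, chi7 x y z⟫ = 0 := by rw [real_inner_comm]; exact hchi1
  have g6 : ⟪cross7 y z, chi7 x y z⟫ = 0 := by rw [real_inner_comm]; exact hchi2
  have hchimem : chi7 x y z ∈ Kᗮ := by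
    rw [hK]
    apply mem_orth_span
    rintro u ⟨i, rfl⟩
    fin_cases i
    · exact g1
    · exact g2
    · exact g3
    · exact g4
    · exact g5
    · exact g6

  -- dimension count
  have hw0 : w ≠ 0 := by
    intro h0
    rw [h0, inner_zero_left] at hww
    norm_num at hww
  have hsw : Submodule.span ℝ {w} ≤ Kᗮ := by
    rw [Submodule.span_le, Set.singleton_subset_iff]
    exact hwmem
  have heq : Submodule.span ℝ {w} = Kᗮ := by
    apply Submodule.eq_of_le_of_finrank_le hsw
    rw [hfr', finrank_span_singleton hw0]
  have hchis : chi7 x y z ∈ Submodule.span ℝ ({w} : Set E7) := by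
    rw [heq]; exact hchimem
  obtain ⟨c, hc⟩ := Submodule.mem_span_singleton.mp hchis
  have hpsieq : psi7 x y z w = c := by
    rw [← inner_chi, ← hc, real_inner_smul_left, hww, mul_one]
  have hnorm : ⟪chi7 x y z, chi7 x y z⟫ = 1 := by
    rw [chi_norm x y z hxx hyy hzz hxy hxz hyz, h1]; ring
  rw [← hc, real_inner_smul_left, real_inner_smul_right, hww] at hnorm
  have hc2 : c = 1 ∨ c = -1 := mul_self_eq_one_iff.mp (by linarith [hnorm])
  rw [hpsieq]
  rcases hc2 with rfl | rfl <;> norm_num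

/-! ### Backward direction -/

lemma coassoc_backward (x y z w : E7)
    (hxx : ⟪x,x⟫ = 1) (hyy : ⟪y,y⟫ = 1) (hzz : ⟪z,z⟫ = 1) (hww : ⟪w,w⟫ = 1)
    (hxy : ⟪x,y⟫ = 0) (hxz : ⟪x,z⟫ = 0) (hyz : ⟪y,z⟫ = 0)
    (hpsi : |psi7 x y z w| = 1) :
    phi7 x y z = 0 ∧ phi7 x y w = 0 ∧ phi7 x z w = 0 ∧ phi7 y z w = 0 := by
  have hiw : ⟪chi7 x y z, w⟫ = psi7 x y z w := inner_chi _ _ _ _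
  have hnorm := chi_norm x y z hxx hyy hzz hxy hxz hyz
  have hsq : psi7 x y z w ^ 2 = 1 := by rw [← sq_abs, hpsi]; norm_num
  have hCS := real_inner_mul_inner_self_le (chi7 x y z) w
  rw [hiw, hnorm, hww] at hCS
  have h1 : phi7 x y z = 0 := by nlinarith [sq_nonneg (phi7 x y z)]
  have hchi1 : ⟪chi7 x y z, chi7 x y z⟫ = 1 := by rw [hnorm, h1]; ring
  have hdiff : ⟪chi7 x y z - psi7 x y z w • w, chi7 x y z - psi7 x y z w • w⟫ = 0 := by
    simp only [inner_sub_left, inner_sub_right, real_inner_smul_left, real_inner_smul_right]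
    have hwc : ⟪w, chi7 x y z⟫ = psi7 x y z w := (real_inner_comm _ _).trans hiw
    simp only [hchi1, hww, hiw, hwc]
    linear_combination (-1 : ℝ) * hsq
  have hce : chi7 x y z = psi7 x y z w • w := sub_eq_zero.mp (inner_self_eq_zero.mp hdiff)
  have hpne : psi7 x y z w ≠ 0 := by
    intro h0; rw [h0] at hsq; norm_num at hsq
  have key : ∀ a b : E7, psi7 x y z (cross7 a b) = 0 → phi7 a b w = 0 := by
    intro a b hab
    have h5 : ⟪w, cross7 a b⟫ = phi7 a b w := by
      rw [real_inner_comm]; exact inner_cross a b w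
    rw [← inner_chi, hce, real_inner_smul_left, h5] at hab
    rcases mul_eq_zero.mp hab with h | h
    · exact absurd h hpne
    · exact h
  refine ⟨h1, key x y (psi7_cross x y z), key x z ?_, key y z ?_⟩
  · have ha := psi7_swap23 x y z (cross7 x z)
    have hb := psi7_cross x z y
    linarith
  · rw [← psi7_cyc123]
    exact psi7_cross y z x

/-! ### Vanishing on the span -/

lemma phi7_perms {a b c : E7} (h : phi7 a b c = 0) :
    phi7 a c b = 0 ∧ phi7 b a c = 0 ∧ phi7 b c a = 0 ∧ phi7 c a b = 0 ∧ phi7 c b a = 0 := by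
  refine ⟨?_, ?_, ?_, ?_, ?_⟩
  · rw [phi7_swap23, h, neg_zero]
  · rw [phi7_swap12, h, neg_zero]
  · rw [phi7_cyc, h]
  · rw [phi7_cyc, phi7_cyc, h]
  · rw [phi7_swap23, phi7_cyc, phi7_cyc, h, neg_zero]

lemma span_vanish (x y z w : E7)
    (h1 : phi7 x y z = 0) (h2 : phi7 x y w = 0) (h3 : phi7 x z w = 0) (h4 : phi7 y z w = 0) :
    ∀ u ∈ Submodule.span ℝ ({x, y, z, w} : Set E7),
    ∀ v ∈ Submodule.span ℝ ({x, y, z, w} : Set E7),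
    ∀ r ∈ Submodule.span ℝ ({x, y, z, w} : Set E7), phi7 u v r = 0 := by
  obtain ⟨q11, q12, q13, q14, q15⟩ := phi7_perms h1
  obtain ⟨q21, q22, q23, q24, q25⟩ := phi7_perms h2
  obtain ⟨q31, q32, q33, q34, q35⟩ := phi7_perms h3
  obtain ⟨q41, q42, q43, q44, q45⟩ := phi7_perms h4
  have key : ∀ a ∈ ({x, y, z, w} : Set E7), ∀ b ∈ ({x, y, z, w} : Set E7),
      ∀ c ∈ ({x, y, z, w} : Set E7), phi7 a b c = 0 := by
    intro a ha b hb c hc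
    simp only [Set.mem_insert_iff, Set.mem_singleton_iff] at ha hb hc
    rcases ha with rfl | rfl | rfl | rfl <;> rcases hb with rfl | rfl | rfl | rfl <;>
      rcases hc with rfl | rfl | rfl | rfl
    · exact phi7_aab _ _
    · exact phi7_aab _ _
    · exact phi7_aab _ _
    · exact phi7_aab _ _
    · exact phi7_aba _ _
    · exact phi7_abb _ _
    · exact h1
    · exact h2
    · exact phi7_aba _ _
    · exact q11
    · exact phi7_abb _ _
    · exact h3
    · exact phi7_aba _ _
    · exact q21
    · exact q31
    · exact phi7_abb _ _
    · exact phi7_abb _ _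
    · exact phi7_aba _ _
    · exact q12
    · exact q22
    · exact phi7_aab _ _
    · exact phi7_aab _ _
    · exact phi7_aab _ _
    · exact phi7_aab _ _
    · exact q13
    · exact phi7_aba _ _
    · exact phi7_abb _ _
    · exact h4
    · exact q23
    · exact phi7_aba _ _
    · exact q41
    · exact phi7_abb _ _
    · exact phi7_abb _ _
    · exact q14
    · exact phi7_aba _ _
    · exact q32
    · exact q15
    · exact phi7_abb _ _
    · exact phi7_aba _ _
    · exact q42
    · exact phi7_aab _ _
    · exact phi7_aab _ _
    · exact phi7_aab _ _
    · exact phi7_aab _ _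
    · exact q33
    · exact q43
    · exact phi7_aba _ _
    · exact phi7_abb _ _
    · exact phi7_abb _ _
    · exact q24
    · exact q34
    · exact phi7_aba _ _
    · exact q25
    · exact phi7_abb _ _
    · exact q44
    · exact phi7_aba _ _
    · exact q35
    · exact q45
    · exact phi7_abb _ _
    · exact phi7_aba _ _
    · exact phi7_aab _ _
    · exact phi7_aab _ _
    · exact phi7_aab _ _
    · exact phi7_aab _ _
  have step3 : ∀ a b : E7, (∀ c ∈ ({x, y, z, w} : Set E7), phi7 a b c = 0) →
      ∀ r ∈ Submodule.span ℝ ({x, y, z, w} : Set E7), phi7 a b r = 0 := by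
    intro a b h0 r hr
    induction hr using Submodule.span_induction with
    | mem c hc => exact h0 c hc
    | zero => exact phi7_zero3 a b
    | add u v hu hv ihu ihv => rw [phi7_add3, ihu, ihv, add_zero]
    | smul t u hu ihu => rw [phi7_smul3, ihu, mul_zero]
  have step2 : ∀ a : E7, (∀ b ∈ ({x, y, z, w} : Set E7), ∀ c ∈ ({x, y, z, w} : Set E7),
      phi7 a b c = 0) →
      ∀ v ∈ Submodule.span ℝ ({x, y, z, w} : Set E7),
      ∀ r ∈ Submodule.span ℝ ({x, y, z, w} : Set E7), phi7 a v r = 0 := by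
    intro a h0 v hv
    induction hv using Submodule.span_induction with
    | mem b hb => exact step3 a b (h0 b hb)
    | zero => intro r hr; rw [phi7_zero2]
    | add u v hu hv ihu ihv =>
        intro r hr; rw [phi7_add2, ihu r hr, ihv r hr, add_zero]
    | smul t u hu ihu => intro r hr; rw [phi7_smul2, ihu r hr, mul_zero]
  intro u hu
  induction hu using Submodule.span_induction with
  | mem a ha => exact step2 a (key a ha)
  | zero => intro v hv r hr; rw [phi7_zero1]
  | add p q hp hq ihp ihq =>
      intro v hv r hr; rw [phi7_add1, ihp v hv r hr, ihq v hv r hr, add_zero]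
  | smul t p hp ihp => intro v hv r hr; rw [phi7_smul1, ihp v hv r hr, mul_zero]

/-- Pointwise coassociative characterization: for orthonormal `x, y, z, w` spanning `S`,
`φ` vanishes identically on `S` iff `|ψ(x,y,z,w)| = 1`. -/
theorem coassoc_characterization (x y z w : E7) (h : Orthonormal ℝ ![x, y, z, w]) :
    (∀ u ∈ Submodule.span ℝ ({x, y, z, w} : Set E7),
     ∀ v ∈ Submodule.span ℝ ({x, y, z, w} : Set E7),
     ∀ r ∈ Submodule.span ℝ ({x, y, z, w} : Set E7), phi7 u v r = 0)
    ↔ |psi7 x y z w| = 1 := by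
  have hc := orthonormal_iff_ite.mp h
  have hxx : ⟪x,x⟫ = 1 := by simpa using hc 0 0
  have hyy : ⟪y,y⟫ = 1 := by simpa using hc 1 1
  have hzz : ⟪z,z⟫ = 1 := by simpa using hc 2 2
  have hww : ⟪w,w⟫ = 1 := by simpa using hc 3 3
  have hxy : ⟪x,y⟫ = 0 := by simpa using hc 0 1
  have hxz : ⟪x,z⟫ = 0 := by simpa using hc 0 2
  have hxw : ⟪x,w⟫ = 0 := by simpa using hc 0 3
  have hyz : ⟪y,z⟫ = 0 := by simpa using hc 1 2
  have hyw : ⟪y,w⟫ = 0 := by simpa using hc 1 3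
  have hzw : ⟪z,w⟫ = 0 := by simpa using hc 2 3
  have mx : x ∈ Submodule.span ℝ ({x, y, z, w} : Set E7) :=
    Submodule.subset_span (by simp)
  have my : y ∈ Submodule.span ℝ ({x, y, z, w} : Set E7) :=
    Submodule.subset_span (by simp)
  have mz : z ∈ Submodule.span ℝ ({x, y, z, w} : Set E7) :=
    Submodule.subset_span (by simp)
  have mw : w ∈ Submodule.span ℝ ({x, y, z, w} : Set E7) :=
    Submodule.subset_span (by simp)
  constructor
  · intro H
    exact coassoc_forward x y z w hxx hyy hzz hww hxy hxz hxw hyz hyw hzw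
      (H x mx y my z mz) (H x mx y my w mw) (H x mx z mz w mw) (H y my z mz w mw)
  · intro hpsi
    obtain ⟨h1, h2, h3, h4⟩ :=
      coassoc_backward x y z w hxx hyy hzz hww hxy hxz hyz hpsi
    exact span_vanish x y z w h1 h2 h3 h4
end
end

section
/- (Pointwise form of the remark following equation (2.14)) Let W be a 3-dimensional linear subspace of ℝ⁷. Then W is closed under the cross product (i.e. x×y ∈ W for all x, y ∈ W) if and only if χ(x,y,z) = 0 for all x, y, z ∈ W. -/
open scoped RealInnerProductSpace

noncomputable section

namespace G2Aux

/-! ### Integer-coefficient versions and the key contraction identity -/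

def kdZ (i j : Fin 7) : ℤ := if i = j then 1 else 0

def tripZ (a b c i j k : Fin 7) : ℤ :=
  kdZ a i * (kdZ b j * kdZ c k - kdZ b k * kdZ c j)
  - kdZ a j * (kdZ b i * kdZ c k - kdZ b k * kdZ c i)
  + kdZ a k * (kdZ b i * kdZ c j - kdZ b j * kdZ c i)

def quadZ (a b c d i j k l : Fin 7) : ℤ :=
  kdZ a i * tripZ b c d j k l - kdZ a j * tripZ b c d i k l
  + kdZ a k * tripZ b c d i j l - kdZ a l * tripZ b c d i j k

def phiZ (i j k : Fin 7) : ℤ :=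
  tripZ 0 1 2 i j k + tripZ 0 3 4 i j k - tripZ 0 5 6 i j k
  + tripZ 1 3 5 i j k - tripZ 1 6 4 i j k + tripZ 2 3 6 i j k - tripZ 2 4 5 i j k

def psiZ (i j k l : Fin 7) : ℤ :=
  quadZ 3 4 5 6 i j k l - quadZ 1 2 3 4 i j k l + quadZ 1 2 5 6 i j k l
  - quadZ 2 0 3 5 i j k l + quadZ 2 0 6 4 i j k l
  - quadZ 0 1 3 6 i j k l + quadZ 0 1 4 5 i j k l

lemma kd7_cast (i j : Fin 7) : kd7 i j = ((kdZ i j : ℤ) : ℝ) := by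
  simp [kd7, kdZ, apply_ite (Int.cast : ℤ → ℝ)]

lemma trip7_cast (a b c i j k : Fin 7) : trip7 a b c i j k = ((tripZ a b c i j k : ℤ) : ℝ) := by
  simp only [trip7, tripZ, Matrix.det_fin_three, kd7_cast]
  push_cast
  simp [Matrix.cons_val_zero, Matrix.cons_val_one, Matrix.head_cons]
  ring

lemma quad7_cast (a b c d i j k l : Fin 7) :
    quad7 a b c d i j k l = ((quadZ a b c d i j k l : ℤ) : ℝ) := by
  simp only [quad7, kd7_cast]
  rw [Matrix.det_succ_row_zero]
  simp +decide [Fin.sum_univ_four, Matrix.det_fin_three, Matrix.submatrix_apply, Fin.succAbove,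
    quadZ, tripZ, show ((Fin.castSucc 2 : Fin 4)) = (2 : Fin 4) from rfl,
    Matrix.cons_val_two, Matrix.vecTail, Matrix.vecHead]
  ring

lemma phiC_cast (i j k : Fin 7) : phiC i j k = ((phiZ i j k : ℤ) : ℝ) := by
  simp only [phiC, phiZ, trip7_cast]; push_cast; ring

lemma psiC_cast (i j k l : Fin 7) : psiC i j k l = ((psiZ i j k l : ℤ) : ℝ) := by
  simp only [psiC, psiZ, quad7_cast]; push_cast; ring

/-! ### Components of `cross7` and `chi7` -/

lemma e7_apply (m k : Fin 7) : e7 m k = if k = m then 1 else 0 := by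
  simp [e7, EuclideanSpace.single_apply]

lemma cross7_apply (x y : E7) (m : Fin 7) :
    cross7 x y m = ∑ i, ∑ j, x i * y j * phiC i j m := by
  show phi7 x y (e7 m) = _
  unfold phi7
  refine Finset.sum_congr rfl fun i _ => Finset.sum_congr rfl fun j _ => ?_
  simp [e7_apply, mul_ite, ite_mul, Finset.sum_ite_eq']

lemma chi7_apply (x y z : E7) (l : Fin 7) :
    chi7 x y z l = ∑ i, ∑ j, ∑ k, x i * y j * z k * psiC i j k l := by
  show psi7 x y z (e7 l) = _
  unfold psi7
  refine Finset.sum_congr rfl fun i _ => Finset.sum_congr rfl fun j _ =>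
    Finset.sum_congr rfl fun k _ => ?_
  simp [e7_apply, mul_ite, ite_mul, Finset.sum_ite_eq']

/-! ### Antisymmetry of the coefficient tensors -/

lemma phiZ_swap01 (i j k : Fin 7) : phiZ i j k + phiZ j i k = 0 := by
  simp only [phiZ, tripZ]; ring
lemma psiZ_swap01 (i j k l : Fin 7) : psiZ i j k l + psiZ j i k l = 0 := by
  simp only [psiZ, quadZ, tripZ]; ring
lemma psiZ_swap12 (i j k l : Fin 7) : psiZ i j k l + psiZ i k j l = 0 := by
  simp only [psiZ, quadZ, tripZ]; ring
lemma psiZ_swap23 (i j k l : Fin 7) : psiZ i j k l + psiZ i j l k = 0 := by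
  simp only [psiZ, quadZ, tripZ]; ring
lemma psiZ_swap02 (i j k l : Fin 7) : psiZ i j k l + psiZ k j i l = 0 := by
  simp only [psiZ, quadZ, tripZ]; ring
lemma psiZ_swap03 (i j k l : Fin 7) : psiZ i j k l + psiZ l j k i = 0 := by
  simp only [psiZ, quadZ, tripZ]; ring
lemma psiZ_swap13 (i j k l : Fin 7) : psiZ i j k l + psiZ i l k j = 0 := by
  simp only [psiZ, quadZ, tripZ]; ring

lemma phiC_swap01 (i j k : Fin 7) : phiC i j k + phiC j i k = 0 := by
  rw [phiC_cast, phiC_cast, ← Int.cast_add, phiZ_swap01, Int.cast_zero]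
lemma psiC_swap01 (i j k l : Fin 7) : psiC i j k l + psiC j i k l = 0 := by
  rw [psiC_cast, psiC_cast, ← Int.cast_add, psiZ_swap01, Int.cast_zero]
lemma psiC_swap12 (i j k l : Fin 7) : psiC i j k l + psiC i k j l = 0 := by
  rw [psiC_cast, psiC_cast, ← Int.cast_add, psiZ_swap12, Int.cast_zero]
lemma psiC_swap23 (i j k l : Fin 7) : psiC i j k l + psiC i j l k = 0 := by
  rw [psiC_cast, psiC_cast, ← Int.cast_add, psiZ_swap23, Int.cast_zero]
lemma psiC_swap02 (i j k l : Fin 7) : psiC i j k l + psiC k j i l = 0 := by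
  rw [psiC_cast, psiC_cast, ← Int.cast_add, psiZ_swap02, Int.cast_zero]
lemma psiC_swap03 (i j k l : Fin 7) : psiC i j k l + psiC l j k i = 0 := by
  rw [psiC_cast, psiC_cast, ← Int.cast_add, psiZ_swap03, Int.cast_zero]
lemma psiC_swap13 (i j k l : Fin 7) : psiC i j k l + psiC i l k j = 0 := by
  rw [psiC_cast, psiC_cast, ← Int.cast_add, psiZ_swap13, Int.cast_zero]

/-! ### Summation helpers -/

lemma sum_antisym {f : Fin 7 → Fin 7 → ℝ} (h : ∀ i j, f i j + f j i = 0) :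
    (∑ i, ∑ j, f i j) = 0 := by
  have h2 : (∑ i : Fin 7, ∑ j : Fin 7, f i j) = ∑ i : Fin 7, ∑ j : Fin 7, f j i :=
    Finset.sum_comm
  have h3 : (∑ i : Fin 7, ∑ j : Fin 7, (f i j + f j i)) = 0 := by
    simp only [h, Finset.sum_const_zero]
  simp only [Finset.sum_add_distrib] at h3
  rw [← h2] at h3
  linarith

lemma sum3_rot (F : Fin 7 → Fin 7 → Fin 7 → ℝ) :
    (∑ j, ∑ k, ∑ l, F j k l) = ∑ l, ∑ j, ∑ k, F j k l := by
  calc (∑ j, ∑ k, ∑ l, F j k l) = ∑ j, ∑ l, ∑ k, F j k l :=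
        Finset.sum_congr rfl fun j _ => Finset.sum_comm
  _ = ∑ l, ∑ j, ∑ k, F j k l := Finset.sum_comm

lemma sum4_rot (F : Fin 7 → Fin 7 → Fin 7 → Fin 7 → ℝ) :
    (∑ l, ∑ i, ∑ j, ∑ k, F l i j k) = ∑ i, ∑ j, ∑ k, ∑ l, F l i j k := by
  calc (∑ l, ∑ i, ∑ j, ∑ k, F l i j k) = ∑ i, ∑ l, ∑ j, ∑ k, F l i j k := Finset.sum_comm
  _ = ∑ i, ∑ j, ∑ l, ∑ k, F l i j k := Finset.sum_congr rfl fun i _ => Finset.sum_comm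
  _ = ∑ i, ∑ j, ∑ k, ∑ l, F l i j k :=
      Finset.sum_congr rfl fun i _ => Finset.sum_congr rfl fun j _ => Finset.sum_comm

/-! ### `psi7` is alternating -/

lemma psi7_01 (x z w : E7) : psi7 x x z w = 0 := by
  unfold psi7
  refine sum_antisym fun i j => ?_
  simp only [← Finset.sum_add_distrib]
  refine Finset.sum_eq_zero fun k _ => Finset.sum_eq_zero fun l _ => ?_
  linear_combination (x i * x j * z k * w l) * psiC_swap01 i j k l

lemma psi7_02 (x y w : E7) : psi7 x y x w = 0 := by
  unfold psi7
  rw [show (∑ i, ∑ j, ∑ k, ∑ l, x i * y j * x k * w l * psiC i j k l)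
      = ∑ i, ∑ k, ∑ j, ∑ l, x i * y j * x k * w l * psiC i j k l from
    Finset.sum_congr rfl fun i _ => Finset.sum_comm]
  refine sum_antisym fun i k => ?_
  simp only [← Finset.sum_add_distrib]
  refine Finset.sum_eq_zero fun j _ => Finset.sum_eq_zero fun l _ => ?_
  linear_combination (x i * y j * x k * w l) * psiC_swap02 i j k l

lemma psi7_03 (x y z : E7) : psi7 x y z x = 0 := by
  unfold psi7
  rw [show (∑ i, ∑ j, ∑ k, ∑ l, x i * y j * z k * x l * psiC i j k l)
      = ∑ i, ∑ l, ∑ j, ∑ k, x i * y j * z k * x l * psiC i j k l from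
    Finset.sum_congr rfl fun i _ => sum3_rot _]
  refine sum_antisym fun i l => ?_
  simp only [← Finset.sum_add_distrib]
  refine Finset.sum_eq_zero fun j _ => Finset.sum_eq_zero fun k _ => ?_
  linear_combination (x i * y j * z k * x l) * psiC_swap03 i j k l

lemma psi7_12 (x y w : E7) : psi7 x y y w = 0 := by
  unfold psi7
  refine Finset.sum_eq_zero fun i _ => ?_
  refine sum_antisym fun j k => ?_
  simp only [← Finset.sum_add_distrib]
  refine Finset.sum_eq_zero fun l _ => ?_
  linear_combination (x i * y j * y k * w l) * psiC_swap12 i j k l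

lemma psi7_13 (x y z : E7) : psi7 x y z y = 0 := by
  unfold psi7
  refine Finset.sum_eq_zero fun i _ => ?_
  rw [show (∑ j, ∑ k, ∑ l, x i * y j * z k * y l * psiC i j k l)
      = ∑ j, ∑ l, ∑ k, x i * y j * z k * y l * psiC i j k l from
    Finset.sum_congr rfl fun j _ => Finset.sum_comm]
  refine sum_antisym fun j l => ?_
  simp only [← Finset.sum_add_distrib]
  refine Finset.sum_eq_zero fun k _ => ?_
  linear_combination (x i * y j * z k * y l) * psiC_swap13 i j k l

lemma psi7_23 (x y z : E7) : psi7 x y z z = 0 := by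
  unfold psi7
  refine Finset.sum_eq_zero fun i _ => Finset.sum_eq_zero fun j _ => ?_
  refine sum_antisym fun k l => ?_
  linear_combination (x i * y j * z k * z l) * psiC_swap23 i j k l

/-! ### `psi7` as an alternating map -/

def psiM : MultilinearMap ℝ (fun _ : Fin 4 => E7) ℝ :=
  ∑ i, ∑ j, ∑ k, ∑ l, psiC i j k l •
    (MultilinearMap.mkPiAlgebra ℝ (Fin 4) ℝ).compLinearMap
      ![EuclideanSpace.projₗ i, EuclideanSpace.projₗ j, EuclideanSpace.projₗ k,
        EuclideanSpace.projₗ l]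

lemma psiM_apply (v : Fin 4 → E7) : psiM v = psi7 (v 0) (v 1) (v 2) (v 3) := by
  unfold psiM psi7
  simp only [MultilinearMap.sum_apply, MultilinearMap.smul_apply,
    MultilinearMap.compLinearMap_apply, MultilinearMap.mkPiAlgebra_apply,
    Fin.prod_univ_four, smul_eq_mul]
  refine Finset.sum_congr rfl fun i _ => Finset.sum_congr rfl fun j _ =>
    Finset.sum_congr rfl fun k _ => Finset.sum_congr rfl fun l _ => ?_
  simp [EuclideanSpace.projₗ]
  ring

def psiAlt : AlternatingMap ℝ E7 ℝ (Fin 4) where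
  toFun := psiM
  map_update_add' := psiM.map_update_add
  map_update_smul' := psiM.map_update_smul
  map_eq_zero_of_eq' := by
    intro v i j hveq hne
    show psiM v = 0
    rw [psiM_apply]
    fin_cases i <;> fin_cases j <;>
    first
      | exact absurd rfl hne
      | (have h : v 0 = v 1 := hveq; rw [h]; exact psi7_01 _ _ _)
      | (have h : v 1 = v 0 := hveq; rw [h]; exact psi7_01 _ _ _)
      | (have h : v 0 = v 2 := hveq; rw [h]; exact psi7_02 _ _ _)
      | (have h : v 2 = v 0 := hveq; rw [h]; exact psi7_02 _ _ _)
      | (have h : v 0 = v 3 := hveq; rw [h]; exact psi7_03 _ _ _)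
      | (have h : v 3 = v 0 := hveq; rw [h]; exact psi7_03 _ _ _)
      | (have h : v 1 = v 2 := hveq; rw [h]; exact psi7_12 _ _ _)
      | (have h : v 2 = v 1 := hveq; rw [h]; exact psi7_12 _ _ _)
      | (have h : v 1 = v 3 := hveq; rw [h]; exact psi7_13 _ _ _)
      | (have h : v 3 = v 1 := hveq; rw [h]; exact psi7_13 _ _ _)
      | (have h : v 2 = v 3 := hveq; rw [h]; exact psi7_23 _ _ _)
      | (have h : v 3 = v 2 := hveq; rw [h]; exact psi7_23 _ _ _)

/-! ### The key contraction identity and the fundamental formula for `chi7` -/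

set_option maxRecDepth 100000 in
set_option maxHeartbeats 4000000 in
lemma keyZ : ∀ i j k l : Fin 7,
    psiZ i j k l = -(∑ m, phiZ i j m * phiZ m k l) - kdZ j k * kdZ i l + kdZ i k * kdZ j l := by
  decide

lemma key_coeff (i j k l : Fin 7) :
    psiC i j k l = -(∑ m, phiC i j m * phiC m k l) - kd7 j k * kd7 i l + kd7 i k * kd7 j l := by
  have h := keyZ i j k l
  rw [psiC_cast, h]
  push_cast
  simp only [phiC_cast, kd7_cast]

lemma real_inner_e (x y : E7) : ⟪x, y⟫ = ∑ i, x i * y i := by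
  simp [PiLp.inner_apply, RCLike.inner_apply, starRingEnd_apply, star_trivial]
  exact Finset.sum_congr rfl fun i _ => mul_comm _ _

lemma B_lemma (x y z : E7) (l : Fin 7) :
    (∑ i, ∑ j, ∑ k, x i * y j * z k * (kd7 j k * kd7 i l)) = ⟪y, z⟫ * x l := by
  rw [real_inner_e, Finset.sum_mul]
  simp [kd7, mul_ite, ite_mul, Finset.sum_ite_eq, Finset.sum_ite_eq']
  exact Finset.sum_congr rfl fun j _ => by ring

lemma C_lemma (x y z : E7) (l : Fin 7) :
    (∑ i, ∑ j, ∑ k, x i * y j * z k * (kd7 i k * kd7 j l)) = ⟪x, z⟫ * y l := by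
  rw [real_inner_e, Finset.sum_mul]
  simp [kd7, mul_ite, ite_mul, Finset.sum_ite_eq, Finset.sum_ite_eq']
  exact Finset.sum_congr rfl fun j _ => by ring

lemma A_lemma (x y z : E7) (l : Fin 7) :
    (∑ i, ∑ j, ∑ k, x i * y j * z k * (∑ m, phiC i j m * phiC m k l))
      = cross7 (cross7 x y) z l := by
  rw [cross7_apply]
  simp only [cross7_apply, Finset.sum_mul, Finset.mul_sum]
  rw [← sum4_rot (fun m i j k => x i * y j * z k * (phiC i j m * phiC m k l))]
  refine Finset.sum_congr rfl fun m _ => ?_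
  rw [sum3_rot (fun i j k => x i * y j * z k * (phiC i j m * phiC m k l))]
  refine Finset.sum_congr rfl fun k _ => Finset.sum_congr rfl fun i _ =>
    Finset.sum_congr rfl fun j _ => by ring

/-- The fundamental identity `χ(x,y,z) = ⟨x,z⟩y − ⟨y,z⟩x − (x×y)×z`. -/
lemma chi7_eq (x y z : E7) :
    chi7 x y z = ⟪x, z⟫ • y - ⟪y, z⟫ • x - cross7 (cross7 x y) z := by
  refine PiLp.ext fun l => ?_
  have expand : chi7 x y z l =
      -(∑ i, ∑ j, ∑ k, x i * y j * z k * (∑ m, phiC i j m * phiC m k l))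
      - (∑ i, ∑ j, ∑ k, x i * y j * z k * (kd7 j k * kd7 i l))
      + (∑ i, ∑ j, ∑ k, x i * y j * z k * (kd7 i k * kd7 j l)) := by
    rw [chi7_apply]
    simp only [key_coeff, mul_add, mul_sub, mul_neg, Finset.sum_add_distrib,
      Finset.sum_sub_distrib]
    simp only [Finset.sum_neg_distrib]
  rw [expand, A_lemma, B_lemma, C_lemma]
  show _ = (⟪x, z⟫ • y - ⟪y, z⟫ • x - cross7 (cross7 x y) z) l
  simp only [PiLp.sub_apply, PiLp.smul_apply, smul_eq_mul]
  ring

/-! ### Further algebraic facts about `cross7` and `chi7` -/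

lemma inner_chi7 (x y z w : E7) : ⟪chi7 x y z, w⟫ = psi7 x y z w := by
  rw [real_inner_e]
  have hterm : ∀ l, chi7 x y z l * w l
      = ∑ i, ∑ j, ∑ k, x i * y j * z k * w l * psiC i j k l := by
    intro l
    rw [chi7_apply, Finset.sum_mul]
    refine Finset.sum_congr rfl fun i _ => ?_
    rw [Finset.sum_mul]
    refine Finset.sum_congr rfl fun j _ => ?_
    rw [Finset.sum_mul]
    exact Finset.sum_congr rfl fun k _ => by ring
  rw [show (∑ l, chi7 x y z l * w l)
      = ∑ l, ∑ i, ∑ j, ∑ k, x i * y j * z k * w l * psiC i j k l from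
    Finset.sum_congr rfl fun l _ => hterm l]
  unfold psi7
  exact sum4_rot (fun l i j k => x i * y j * z k * w l * psiC i j k l)

lemma chi7_alt02 (x y : E7) : chi7 x y x = 0 := by
  refine PiLp.ext fun l => ?_
  show psi7 x y x (e7 l) = (0 : E7) l
  rw [psi7_02]
  simp

lemma cross7_self (x : E7) : cross7 x x = 0 := by
  refine PiLp.ext fun m => ?_
  rw [cross7_apply]
  show _ = (0 : E7) m
  rw [sum_antisym fun i j => by
    linear_combination (x i * x j) * phiC_swap01 i j m]
  simp

lemma cross7_neg (x y : E7) : cross7 y x = -cross7 x y := by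
  refine PiLp.ext fun m => ?_
  show cross7 y x m = (-cross7 x y) m
  rw [PiLp.neg_apply, cross7_apply, cross7_apply, eq_neg_iff_add_eq_zero]
  rw [show (∑ i, ∑ j, y i * x j * phiC i j m) = ∑ i, ∑ j, y j * x i * phiC j i m from
    Finset.sum_comm]
  simp only [← Finset.sum_add_distrib]
  refine Finset.sum_eq_zero fun i _ => Finset.sum_eq_zero fun j _ => ?_
  linear_combination (x i * y j) * phiC_swap01 i j m

lemma cross7_add_left (x x' y : E7) : cross7 (x + x') y = cross7 x y + cross7 x' y := by
  refine PiLp.ext fun m => ?_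
  show cross7 (x + x') y m = (cross7 x y + cross7 x' y) m
  simp only [PiLp.add_apply, cross7_apply, add_mul, Finset.sum_add_distrib]

lemma cross7_add_right (x y y' : E7) : cross7 x (y + y') = cross7 x y + cross7 x y' := by
  refine PiLp.ext fun m => ?_
  show cross7 x (y + y') m = (cross7 x y + cross7 x y') m
  simp only [PiLp.add_apply, cross7_apply, mul_add, add_mul, Finset.sum_add_distrib]

lemma cross7_smul_left (c : ℝ) (x y : E7) : cross7 (c • x) y = c • cross7 x y := by
  refine PiLp.ext fun m => ?_
  show cross7 (c • x) y m = (c • cross7 x y) m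
  simp only [PiLp.smul_apply, cross7_apply, smul_eq_mul, Finset.mul_sum]
  exact Finset.sum_congr rfl fun i _ => Finset.sum_congr rfl fun j _ => by ring

lemma cross7_smul_right (c : ℝ) (x y : E7) : cross7 x (c • y) = c • cross7 x y := by
  refine PiLp.ext fun m => ?_
  show cross7 x (c • y) m = (c • cross7 x y) m
  simp only [PiLp.smul_apply, cross7_apply, smul_eq_mul, Finset.mul_sum]
  exact Finset.sum_congr rfl fun i _ => Finset.sum_congr rfl fun j _ => by ring

/-- `cross7` as a bilinear map. -/
def crossL : E7 →ₗ[ℝ] E7 →ₗ[ℝ] E7 :=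
  LinearMap.mk₂ ℝ cross7 cross7_add_left cross7_smul_left cross7_add_right cross7_smul_right

lemma cross7_zero_left (y : E7) : cross7 0 y = 0 := by
  have := cross7_smul_left 0 0 y
  simpa using this

/-- `ψ` vanishes on any four vectors of a 3-dimensional subspace. -/
lemma psi7_vanish (W : Submodule ℝ E7) (hW : Module.finrank ℝ W = 3)
    {x y z w : E7} (hx : x ∈ W) (hy : y ∈ W) (hz : z ∈ W) (hw : w ∈ W) :
    psi7 x y z w = 0 := by
  have hv : ∀ i, (![x, y, z, w] i) ∈ W := by
    intro i; fin_cases i <;> assumption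
  have hdep : ¬ LinearIndependent ℝ ![x, y, z, w] := by
    intro h
    have h4 : LinearIndependent ℝ (fun i => (⟨![x, y, z, w] i, hv i⟩ : W)) := by
      refine LinearIndependent.of_comp W.subtype ?_
      convert h using 1
      rfl
    have hle := h4.fintype_card_le_finrank
    rw [hW] at hle
    simp at hle
  have h0 := psiAlt.map_linearDependent ![x, y, z, w] hdep
  rw [show psiAlt ![x, y, z, w] = psiM ![x, y, z, w] from rfl, psiM_apply] at h0
  simpa using h0

end G2Aux

open G2Aux

/-- Pointwise form of the remark following equation (2.14): a 3-dimensional subspace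
`W ⊆ ℝ⁷` is closed under the cross product iff `χ` vanishes identically on `W`. -/
theorem assoc_iff_chi_vanishes (W : Submodule ℝ E7) (hW : Module.finrank ℝ W = 3) :
    (∀ x ∈ W, ∀ y ∈ W, cross7 x y ∈ W) ↔
    (∀ x ∈ W, ∀ y ∈ W, ∀ z ∈ W, chi7 x y z = 0) := by
  constructor
  · -- closure under × implies χ vanishes
    intro hcl x hx y hy z hz
    have hmem : chi7 x y z ∈ W := by
      rw [chi7_eq]
      exact sub_mem (sub_mem (W.smul_mem _ hy) (W.smul_mem _ hx))
        (hcl _ (hcl _ hx _ hy) _ hz)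
    have h0 : ⟪chi7 x y z, chi7 x y z⟫ = 0 := by
      rw [inner_chi7]
      exact psi7_vanish W hW hx hy hz hmem
    exact inner_self_eq_zero.mp h0
  · -- χ vanishing implies closure under ×
    intro hchi x hx y hy
    let ob : OrthonormalBasis (Fin 3) ℝ W :=
      (stdOrthonormalBasis ℝ W).reindex (finCongr (by rw [hW]))
    set f : Fin 3 → E7 := fun i => (ob i : E7) with hf
    have hfW : ∀ i, f i ∈ W := fun i => (ob i).2
    have hon : ∀ i j, ⟪f i, f j⟫ = if i = j then 1 else 0 := by
      intro i j
      have h := orthonormal_iff_ite.mp ob.orthonormal i j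
      rw [Submodule.coe_inner] at h
      exact h
    have key : ∀ i j k : Fin 3, i ≠ j → j ≠ k → i ≠ k → cross7 (f i) (f j) ∈ W := by
      intro i j k hij hjk hik
      have h1 : chi7 (f i) (f j) (f k) = 0 := hchi _ (hfW i) _ (hfW j) _ (hfW k)
      rw [chi7_eq, hon i k, hon j k, if_neg hik, if_neg hjk] at h1
      simp only [zero_smul, sub_zero, zero_sub, neg_eq_zero] at h1
      -- h1 : cross7 (cross7 (f i) (f j)) (f k) = 0
      set v := cross7 (f i) (f j) with hv
      have hkv : cross7 (f k) v = 0 := by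
        rw [cross7_neg v (f k), h1, neg_zero]
      have h2 : chi7 (f k) v (f k) = 0 := chi7_alt02 _ _
      rw [chi7_eq, hkv, cross7_zero_left, hon k k, if_pos rfl, one_smul, sub_zero] at h2
      have h3 : v = ⟪v, f k⟫ • f k := sub_eq_zero.mp h2
      rw [h3]
      exact W.smul_mem _ (hfW k)
    have hbase : ∀ i j : Fin 3, cross7 (f i) (f j) ∈ W := by
      intro i j
      by_cases hij : i = j
      · rw [hij, cross7_self]; exact W.zero_mem
      · have hk : ∀ i j : Fin 3, i ≠ j → ∃ k, j ≠ k ∧ i ≠ k := by decide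
        obtain ⟨k, hjk, hik⟩ := hk i j hij
        exact key i j k hij hjk hik
    -- expand x and y in the basis
    set c : Fin 3 → ℝ := fun i => ob.repr ⟨x, hx⟩ i with hc
    set d : Fin 3 → ℝ := fun j => ob.repr ⟨y, hy⟩ j with hd
    have hx' : x = ∑ i, c i • f i := by
      have h := ob.sum_repr ⟨x, hx⟩
      calc x = ((⟨x, hx⟩ : W) : E7) := rfl
      _ = ((∑ i, c i • ob i : W) : E7) := by rw [h]
      _ = ∑ i, c i • f i := by
          rw [Submodule.coe_sum]
          exact Finset.sum_congr rfl fun i _ => by simp [hf]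
    have hy' : y = ∑ j, d j • f j := by
      have h := ob.sum_repr ⟨y, hy⟩
      calc y = ((⟨y, hy⟩ : W) : E7) := rfl
      _ = ((∑ j, d j • ob j : W) : E7) := by rw [h]
      _ = ∑ j, d j • f j := by
          rw [Submodule.coe_sum]
          exact Finset.sum_congr rfl fun j _ => by simp [hf]
    have hexp : cross7 x y = ∑ i, ∑ j, (c i * d j) • cross7 (f i) (f j) := by
      rw [hx', hy']
      rw [show cross7 (∑ i, c i • f i) (∑ j, d j • f j)
          = crossL (∑ i, c i • f i) (∑ j, d j • f j) from rfl]
      rw [map_sum crossL]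
      rw [LinearMap.sum_apply]
      refine Finset.sum_congr rfl fun i _ => ?_
      rw [map_smul crossL, LinearMap.smul_apply, map_sum (crossL (f i))]
      rw [Finset.smul_sum]
      refine Finset.sum_congr rfl fun j _ => ?_
      rw [map_smul (crossL (f i))]
      rw [smul_smul]
      rfl
    rw [hexp]
    exact Submodule.sum_mem _ fun i _ => Submodule.sum_mem _ fun j _ =>
      Submodule.smul_mem _ _ (hbase i j)
end
end

section
/- (Pointwise Smith condition implies weak conformality; Lemma 3.1 and Remark 3.2 at a point) Let 1 ≤ k ≤ n, let L : ℝᵏ → ℝⁿ be a linear map, and let μ be an alternating k-form on ℝⁿ of comass at most one, i.e. μ(w₁,…,w_k)² ≤ det G(w) for all w₁,…,w_k ∈ ℝⁿ, where G(w)_{ij} = ⟨w_i, w_j⟩ is the Gram matrix. Set E = Σ_{i=1}^k ‖L e_i‖², where e₁,…,e_k is the standard basis of ℝᵏ. If μ(L e₁, …, L e_k) = k^{−k/2} · E^{k/2}, then ⟨L x, L y⟩ = (E/k) ⟨x, y⟩ for all x, y ∈ ℝᵏ. -/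
open scoped RealInnerProductSpace

open Finset in
lemma amgm_eq_aux {k : ℕ} (hk : 0 < k) (E : ℝ) (lam : Fin k → ℝ)
    (hnn : ∀ i, 0 ≤ lam i) (hsum : ∑ i, lam i = E)
    (hprod : (E / k) ^ k ≤ ∏ i, lam i) : ∀ i, lam i = E / k := by
  have hkR : (0:ℝ) < k := by exact_mod_cast hk
  have hE : 0 ≤ E := hsum ▸ Finset.sum_nonneg fun i _ => hnn i
  rcases eq_or_lt_of_le hE with hE0 | hEpos
  · intro i
    have := (Finset.sum_eq_zero_iff_of_nonneg (fun i _ => hnn i)).mp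
      (by rw [hsum, ← hE0]) i (Finset.mem_univ i)
    rw [this, ← hE0, zero_div]
  · have hpos : ∀ i, 0 < lam i := by
      intro i
      rcases (hnn i).lt_or_eq with h | h
      · exact h
      · exfalso
        have : ∏ j, lam j = 0 := Finset.prod_eq_zero (Finset.mem_univ i) h.symm
        have h2 : (0:ℝ) < (E / k) ^ k := pow_pos (div_pos hEpos hkR) k
        linarith [hprod, this ▸ hprod]
    -- Jensen equality
    have hw : ∀ i ∈ Finset.univ (α := Fin k), (0:ℝ) < (k:ℝ)⁻¹ := fun _ _ => by positivity
    have hw1 : ∑ _i : Fin k, (k:ℝ)⁻¹ = 1 := by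
      simp [Finset.sum_const, Finset.card_univ]
      field_simp
    have hmem : ∀ i ∈ Finset.univ (α := Fin k), lam i ∈ Set.Ioi (0:ℝ) := fun i _ => hpos i
    have hkey : Real.log (∑ i, (k:ℝ)⁻¹ • lam i) ≤ ∑ i, (k:ℝ)⁻¹ • Real.log (lam i) := by
    -- ∑ (1/k) lam = E/k
      have hs : ∑ i, (k:ℝ)⁻¹ • lam i = E / k := by
        simp only [smul_eq_mul, ← Finset.mul_sum, hsum]; ring
      have hlogprod : Real.log (∏ i, lam i) = ∑ i, Real.log (lam i) :=
        Real.log_prod fun i _ => (hpos i).ne'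
      have h1 : Real.log ((E / k) ^ k) ≤ Real.log (∏ i, lam i) :=
        Real.log_le_log (pow_pos (div_pos hEpos hkR) k) hprod
      rw [Real.log_pow, hlogprod] at h1
      rw [hs]
      have : Real.log (E / k) ≤ (k:ℝ)⁻¹ * ∑ i, Real.log (lam i) := by
        rw [le_inv_mul_iff₀ hkR]
        exact_mod_cast h1
      simpa [smul_eq_mul, ← Finset.mul_sum] using this
    have := strictConcaveOn_log_Ioi.eq_of_map_sum_eq hw hw1 hmem hkey
    intro i
    have hall : ∀ j, lam j = lam i := fun j =>
      this (Finset.mem_univ j) (Finset.mem_univ i)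
    have : (k:ℝ) * lam i = E := by
      rw [← hsum]
      rw [Finset.sum_congr rfl fun j _ => hall j]
      simp [Finset.card_univ, mul_comm]
    field_simp
    linarith

lemma psd_trace_det_eq {k : ℕ} (hk : 0 < k) (E : ℝ) (G : Matrix (Fin k) (Fin k) ℝ)
    (hG : G.PosSemidef) (htr : G.trace = E) (hdet : (E/k)^k ≤ G.det) :
    G = (E / k) • 1 := by
  have hH : G.IsHermitian := hG.1
  have hnn : ∀ i, 0 ≤ hH.eigenvalues i := hG.eigenvalues_nonneg
  have hsum : ∑ i, hH.eigenvalues i = E := by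
    have hst := hH.spectral_theorem
    have hU : (hH.eigenvectorUnitary : Matrix (Fin k) (Fin k) ℝ) ∈ Matrix.unitaryGroup (Fin k) ℝ :=
      hH.eigenvectorUnitary.2
    have : G.trace = (Matrix.diagonal (RCLike.ofReal ∘ hH.eigenvalues)).trace := by
      conv_lhs => rw [hst]
      rw [Unitary.conjStarAlgAut_apply, Matrix.trace_mul_cycle,
        (Matrix.mem_unitaryGroup_iff'.mp hU), Matrix.one_mul]
    rw [htr] at this
    simpa [Matrix.trace_diagonal] using this.symm
  have hprod : ∏ i, hH.eigenvalues i = G.det := by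
    have := hH.det_eq_prod_eigenvalues
    simpa using this.symm
  have heig : ∀ i, hH.eigenvalues i = E / k :=
    amgm_eq_aux hk E _ hnn hsum (hprod ▸ hdet)
  have hdiag : Matrix.diagonal (RCLike.ofReal ∘ hH.eigenvalues) = (E/k) • (1 : Matrix (Fin k) (Fin k) ℝ) := by
    ext i j
    by_cases h : i = j <;>
      simp [Matrix.diagonal, h, heig, Matrix.one_apply]
  have hU : (hH.eigenvectorUnitary : Matrix (Fin k) (Fin k) ℝ) ∈ Matrix.unitaryGroup (Fin k) ℝ :=
    hH.eigenvectorUnitary.2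
  calc G = _ := hH.spectral_theorem
    _ = (E/k) • ((hH.eigenvectorUnitary : Matrix (Fin k) (Fin k) ℝ) *
          star (hH.eigenvectorUnitary : Matrix (Fin k) (Fin k) ℝ)) := by
        rw [hdiag]; simp [Matrix.mul_smul, Matrix.smul_mul]
    _ = (E / k) • 1 := by rw [Matrix.mem_unitaryGroup_iff.mp hU]

/-- Pointwise Smith condition implies weak conformality (Lemma 3.1 and Remark 3.2 at a
point): if `μ` is an alternating `k`-form on ℝⁿ of comass at most one and the linear map
`L : ℝᵏ → ℝⁿ` satisfies `μ(L e₁, …, L e_k) = k^{−k/2} E^{k/2}` where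
`E = Σ_i ‖L e_i‖²`, then `L` is weakly conformal with conformal factor `E/k`. -/
theorem smith_pointwise_weakly_conformal (k n : ℕ) (hk : 1 ≤ k) (hkn : k ≤ n)
    (L : EuclideanSpace ℝ (Fin k) →ₗ[ℝ] EuclideanSpace ℝ (Fin n))
    (μ : AlternatingMap ℝ (EuclideanSpace ℝ (Fin n)) ℝ (Fin k))
    (hcomass : ∀ w : Fin k → EuclideanSpace ℝ (Fin n),
      (μ w) ^ 2 ≤ Matrix.det (Matrix.of fun i j : Fin k => ⟪w i, w j⟫))
    (E : ℝ) (hE : E = ∑ i : Fin k, ‖L (EuclideanSpace.single i 1)‖ ^ 2)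
    (hSmith : μ (fun i => L (EuclideanSpace.single i 1)) =
      (k : ℝ) ^ (-(k : ℝ) / 2) * E ^ ((k : ℝ) / 2)) :
    ∀ x y : EuclideanSpace ℝ (Fin k), ⟪L x, L y⟫ = (E / k) * ⟪x, y⟫ := by
  set w : Fin k → EuclideanSpace ℝ (Fin n) := fun i => L (EuclideanSpace.single i 1) with hw
  set G : Matrix (Fin k) (Fin k) ℝ := Matrix.of fun i j : Fin k => ⟪w i, w j⟫ with hGdef
  have hE0 : 0 ≤ E := hE ▸ Finset.sum_nonneg fun i _ => sq_nonneg _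
  have hkR : (0:ℝ) < k := by exact_mod_cast hk
  -- G is a Gram matrix, hence PSD
  have hGram : G = (Matrix.of fun (l : Fin n) (i : Fin k) => w i l).conjTranspose *
      (Matrix.of fun (l : Fin n) (i : Fin k) => w i l) := by
    ext i j
    simp [hGdef, Matrix.mul_apply, Matrix.conjTranspose_apply, PiLp.inner_apply,
      RCLike.inner_apply, mul_comm]
  have hPSD : G.PosSemidef := hGram ▸ Matrix.posSemidef_conjTranspose_mul_self _
  -- trace
  have htr : G.trace = E := by
    rw [hE]
    simp only [Matrix.trace, Matrix.diag, hGdef, Matrix.of_apply]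
    exact Finset.sum_congr rfl fun i _ => real_inner_self_eq_norm_sq _
  -- determinant lower bound
  have hdet : (E/k)^k ≤ G.det := by
    have h1 := hcomass w
    have h2 : (μ w) ^ 2 = (E/k)^k := by
      rw [hSmith]
      rw [mul_pow]
      rw [← Real.rpow_natCast ((k:ℝ) ^ (-(k:ℝ)/2)) 2, ← Real.rpow_natCast (E ^ ((k:ℝ)/2)) 2,
        ← Real.rpow_mul (le_of_lt hkR), ← Real.rpow_mul hE0]
      norm_num
      rw [div_pow]
      ring
    rw [← h2]; exact h1
  -- conclude G = (E/k) • 1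
  have hGeq : G = (E / k) • 1 := psd_trace_det_eq hk E G hPSD htr hdet
  have hGij : ∀ i j, ⟪w i, w j⟫ = (E / k) * (if i = j then (1:ℝ) else 0) := by
    intro i j
    have := congrFun (congrFun hGeq i) j
    simpa [hGdef, Matrix.one_apply, mul_comm] using this
  -- bilinear expansion
  intro x y
  have hx : L x = ∑ i, x i • w i := by
    conv_lhs => rw [← (EuclideanSpace.basisFun (Fin k) ℝ).sum_repr x]
    rw [map_sum]
    exact Finset.sum_congr rfl fun i _ => by
      rw [map_smul, EuclideanSpace.basisFun_apply, EuclideanSpace.basisFun_repr]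
  have hy : L y = ∑ i, y i • w i := by
    conv_lhs => rw [← (EuclideanSpace.basisFun (Fin k) ℝ).sum_repr y]
    rw [map_sum]
    exact Finset.sum_congr rfl fun i _ => by
      rw [map_smul, EuclideanSpace.basisFun_apply, EuclideanSpace.basisFun_repr]
  rw [hx, hy, sum_inner]
  have : ∀ i, ⟪x i • w i, ∑ j, y j • w j⟫ = (E/k) * (x i * y i) := by
    intro i
    rw [inner_sum]
    have h1 : ∀ j, ⟪x i • w i, y j • w j⟫ = x i * y j * ((E/k) * (if i = j then (1:ℝ) else 0)) := by
      intro j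
      rw [real_inner_smul_left, real_inner_smul_right, hGij]
      ring
    rw [Finset.sum_congr rfl fun j _ => h1 j]
    simp [Finset.mul_sum]
    ring
  rw [Finset.sum_congr rfl fun i _ => this i, ← Finset.mul_sum]
  simp [PiLp.inner_apply, RCLike.inner_apply]
  left
  exact Finset.sum_congr rfl fun i _ => mul_comm _ _
end
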